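/- For n ≡ 1 or 2 (mod 4), two elements α, β of AM_n of rank n-1 are J-related in AM_n if and only if d(α) and d(β) have the same parity. -/

import Mathlib

/-- Partial transformations on `Fin n`, represented as `Option`-valued maps. -/
abbrev PT (n : ℕ) := Fin n → Option (Fin n)

/-- Left-to-right composition of partial maps: `x (pcomp f g) = (x f) g`. -/
def pcomp {n : ℕ} (f g : PT n) : PT n := fun x => (f x).bind g

/-- The identity partial map. -/
def pid (n : ℕ) : PT n := fun x => some x

instance PTMonoid (n : ℕ) : Monoid (PT n) where
  mul := pcomp
  one := pid n
  mul_assoc f g h := funext fun x => by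
    show ((f x).bind g).bind h = (f x).bind fun y => (g y).bind h
    cases f x <;> rfl
  one_mul f := rfl
  mul_one f := funext fun x => by
    show (f x).bind (fun y => some y) = f x
    cases f x <;> rfl

/-- `f` is injective on its domain. -/
def pInj {n : ℕ} (f : PT n) : Prop := ∀ x y a, f x = some a → f y = some a → x = y

/-- The domain of a partial map. -/
def pDom {n : ℕ} (f : PT n) : Finset (Fin n) := Finset.univ.filter fun x => (f x).isSome

/-- The image of a partial map. -/
def pIm {n : ℕ} (f : PT n) : Finset (Fin n) := Finset.univ.filter fun b => ∃ x, f x = some b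

/-- The rank of a partial map is the size of its domain. -/
def prank {n : ℕ} (f : PT n) : ℕ := (pDom f).card

/-- Order-preserving partial maps. -/
def orderPres {n : ℕ} (f : PT n) : Prop :=
  ∀ x y a b, f x = some a → f y = some b → x ≤ y → a ≤ b

/-- Order-reversing partial maps. -/
def orderRev {n : ℕ} (f : PT n) : Prop :=
  ∀ x y a b, f x = some a → f y = some b → x ≤ y → b ≤ a

/-- Monotone partial maps. -/
def isMonotonePT {n : ℕ} (f : PT n) : Prop := orderPres f ∨ orderRev f

/-- The permutation `σ` extends the partial map `f`. -/
def extendsTo {n : ℕ} (σ : Equiv.Perm (Fin n)) (f : PT n) : Prop :=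
  ∀ x a, f x = some a → σ x = a

/-- Membership in the alternating inverse monoid `AI_n`: an injective partial map of
rank `≤ n - 2`, or one that extends to an even permutation. -/
def inAI {n : ℕ} (f : PT n) : Prop :=
  pInj f ∧ (prank f + 2 ≤ n ∨
    ∃ σ : Equiv.Perm (Fin n), σ ∈ alternatingGroup (Fin n) ∧ extendsTo σ f)

/-- `AO_n = AI_n ∩ POI_n`. -/
def AO (n : ℕ) : Set (PT n) := {f | orderPres f ∧ inAI f}

/-- `AM_n = AI_n ∩ PMI_n`. -/
def AM (n : ℕ) : Set (PT n) := {f | isMonotonePT f ∧ inAI f}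

/-- Green's `J`-relation relative to a submonoid-like subset `S` (containing the identity):
`a J b` iff each lies in the two-sided principal ideal of the other. -/
def JRelIn {n : ℕ} (S : Set (PT n)) (a b : PT n) : Prop :=
  (∃ u v, u ∈ S ∧ v ∈ S ∧ a = u * b * v) ∧ (∃ u v, u ∈ S ∧ v ∈ S ∧ b = u * a * v)

open Finset Equiv Equiv.Perm

namespace Stmt11

variable {n : ℕ}

lemma mem_pDom {f : PT n} {x : Fin n} : x ∈ pDom f ↔ ∃ a, f x = some a := by
  constructor
  · intro h
    have := (Finset.mem_filter.1 h).2
    cases hfx : f x with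
    | some a => exact ⟨a, rfl⟩
    | none => rw [hfx] at this; exact absurd this (by simp)
  · rintro ⟨a, ha⟩
    exact Finset.mem_filter.2 ⟨Finset.mem_univ x, by simp [ha]⟩

lemma mem_pIm {f : PT n} {b : Fin n} : b ∈ pIm f ↔ ∃ x, f x = some b := by
  simp [pIm]

lemma pt_mul_apply (f g : PT n) (x : Fin n) : (f * g) x = (f x).bind g := rfl

lemma pt3_mul_apply (f g h : PT n) (x : Fin n) : (f * g * h) x = ((f x).bind g).bind h := rfl

lemma count_lemma {f : PT n} (hinj : pInj f) (hpres : orderPres f) {x a : Fin n}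
    (hx : f x = some a) :
    ((pDom f).filter (· ≤ x)).card = ((pIm f).filter (· ≤ a)).card := by
  classical
  refine Finset.card_bij (fun y hy => (f y).get (by
    have := (Finset.mem_filter.1 hy).1
    simpa [pDom] using this)) ?_ ?_ ?_
  · intro y hy
    have hy' := Finset.mem_filter.1 hy
    obtain ⟨z, hz⟩ := mem_pDom.1 hy'.1
    simp only [hz, Option.get_some]
    exact Finset.mem_filter.2 ⟨mem_pIm.2 ⟨y, hz⟩, hpres y x z a hz hx hy'.2⟩
  · intro y1 h1 y2 h2 he
    obtain ⟨z1, hz1⟩ := mem_pDom.1 (Finset.mem_filter.1 h1).1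
    obtain ⟨z2, hz2⟩ := mem_pDom.1 (Finset.mem_filter.1 h2).1
    simp only [hz1, hz2, Option.get_some] at he
    exact hinj y1 y2 z1 hz1 (by rw [hz2, he])
  · intro z hz
    have hz' := Finset.mem_filter.1 hz
    obtain ⟨y, hy⟩ := mem_pIm.1 hz'.1
    have hyx : y ≤ x := by
      by_contra hcon
      push_neg at hcon
      have h1 : a ≤ z := hpres x y a z hx hy hcon.le
      have h2 : z = a := le_antisymm hz'.2 h1
      subst h2
      exact absurd (hinj x y z hx hy) (fun h => absurd h.symm hcon.ne')
    refine ⟨y, Finset.mem_filter.2 ⟨mem_pDom.2 ⟨z, hy⟩, hyx⟩, ?_⟩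
    simp [hy]

lemma filter_le_card_inj {s : Finset (Fin n)} {a b : Fin n} (ha : a ∈ s) (hb : b ∈ s)
    (h : (s.filter (· ≤ a)).card = (s.filter (· ≤ b)).card) : a = b := by
  have key : ∀ u v : Fin n, u ∈ s → v ∈ s → u < v →
      (s.filter (· ≤ u)).card < (s.filter (· ≤ v)).card := by
    intro u v hu hv huv
    apply Finset.card_lt_card
    constructor
    · intro w hw
      have hw' := Finset.mem_filter.1 hw
      exact Finset.mem_filter.2 ⟨hw'.1, le_trans hw'.2 huv.le⟩
    · intro hcon
      have : v ∈ s.filter (· ≤ u) := hcon (Finset.mem_filter.2 ⟨hv, le_refl v⟩)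
      exact absurd (Finset.mem_filter.1 this).2 (not_le.2 huv)
  rcases lt_trichotomy a b with hl | he | hl
  · exact absurd h (Nat.ne_of_lt (key a b ha hb hl))
  · exact he
  · exact absurd h.symm (Nat.ne_of_lt (key b a hb ha hl))

lemma orderPres_unique {f g : PT n} (hfi : pInj f) (hgi : pInj g) (hfp : orderPres f)
    (hgp : orderPres g) (hdom : pDom f = pDom g) (him : pIm f = pIm g) : f = g := by
  funext x
  by_cases hx : x ∈ pDom f
  · obtain ⟨a, hfa⟩ := mem_pDom.1 hx
    obtain ⟨b, hgb⟩ := mem_pDom.1 (hdom ▸ hx)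
    rw [hfa, hgb]
    have h1 := count_lemma hfi hfp hfa
    have h2 := count_lemma hgi hgp hgb
    rw [hdom, him] at h1
    have hpa : a ∈ pIm g := him ▸ mem_pIm.2 ⟨x, hfa⟩
    have hpb : b ∈ pIm g := mem_pIm.2 ⟨x, hgb⟩
    rw [filter_le_card_inj hpa hpb (h1.symm.trans h2)]
  · have hx2 : x ∉ pDom g := hdom ▸ hx
    cases hfx : f x with
    | some a => exact absurd (mem_pDom.2 ⟨a, hfx⟩) hx
    | none =>
      cases hgx : g x with
      | some a => exact absurd (mem_pDom.2 ⟨a, hgx⟩) hx2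
      | none => rfl

/-! ### the canonical order-preserving map with domain `univ.erase d`, image `univ.erase i` -/

def opFun (d i x : ℕ) : ℕ :=
  if x < d then (if x < i then x else x + 1) else (if x ≤ i then x - 1 else x)

lemma opFun_lt {d i x : ℕ} (hd : d < n) (hi : i < n) (hx : x < n) (hxd : x ≠ d) :
    opFun d i x < n := by unfold opFun; split_ifs <;> omega

lemma opFun_mono {d i x y : ℕ} (h : x < y) (hxd : x ≠ d) (hyd : y ≠ d) :
    opFun d i x < opFun d i y := by unfold opFun; split_ifs <;> omega

def opMap (d i : Fin n) : PT n := fun x =>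
  if h : x = d then none
  else some ⟨opFun d.val i.val x.val,
    opFun_lt d.isLt i.isLt x.isLt (fun hh => h (Fin.ext hh))⟩

lemma opMap_apply_ne {d i x : Fin n} (h : x ≠ d) :
    opMap d i x = some ⟨opFun d.val i.val x.val,
      opFun_lt d.isLt i.isLt x.isLt (fun hh => h (Fin.ext hh))⟩ := dif_neg h

lemma opMap_dom (d i : Fin n) : pDom (opMap d i) = Finset.univ.erase d := by
  ext x
  rw [mem_pDom, Finset.mem_erase]
  constructor
  · rintro ⟨a, ha⟩
    refine ⟨?_, Finset.mem_univ x⟩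
    intro h
    rw [opMap, dif_pos h] at ha
    simp at ha
  · rintro ⟨h, -⟩
    exact ⟨_, opMap_apply_ne h⟩

lemma opMap_inj (d i : Fin n) : pInj (opMap d i) := by
  intro x y a hx hy
  by_cases hxd : x = d
  · rw [opMap, dif_pos hxd] at hx; simp at hx
  by_cases hyd : y = d
  · rw [opMap, dif_pos hyd] at hy; simp at hy
  rw [opMap_apply_ne hxd] at hx
  rw [opMap_apply_ne hyd] at hy
  have hvx : opFun d.val i.val x.val = a.val := congrArg Fin.val (Option.some.inj hx)
  have hvy : opFun d.val i.val y.val = a.val := congrArg Fin.val (Option.some.inj hy)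
  have hxd' : x.val ≠ d.val := fun hh => hxd (Fin.ext hh)
  have hyd' : y.val ≠ d.val := fun hh => hyd (Fin.ext hh)
  apply Fin.ext
  rcases lt_trichotomy x.val y.val with h | h | h
  · exact absurd (hvx.trans hvy.symm) (Nat.ne_of_lt (opFun_mono (i:=i.val) h hxd' hyd'))
  · exact h
  · exact absurd (hvy.trans hvx.symm) (Nat.ne_of_lt (opFun_mono (i:=i.val) h hyd' hxd'))

lemma opMap_pres (d i : Fin n) : orderPres (opMap d i) := by
  intro x y a b hx hy hxy
  by_cases hxd : x = d
  · rw [opMap, dif_pos hxd] at hx; simp at hx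
  by_cases hyd : y = d
  · rw [opMap, dif_pos hyd] at hy; simp at hy
  rw [opMap_apply_ne hxd] at hx
  rw [opMap_apply_ne hyd] at hy
  have hvx : opFun d.val i.val x.val = a.val := congrArg Fin.val (Option.some.inj hx)
  have hvy : opFun d.val i.val y.val = b.val := congrArg Fin.val (Option.some.inj hy)
  rcases eq_or_lt_of_le hxy with he | hl
  · subst he
    exact le_of_eq (Fin.ext (hvx.symm.trans hvy))
  · have := opFun_mono (i:=i.val) (show x.val < y.val from hl) (fun hh => hxd (Fin.ext hh))
      (fun hh => hyd (Fin.ext hh))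
    exact le_of_lt (show a < b by rw [Fin.lt_def]; omega)

lemma opMap_im (d i : Fin n) : pIm (opMap d i) = Finset.univ.erase i := by
  ext c
  rw [mem_pIm, Finset.mem_erase]
  constructor
  · rintro ⟨x, hx⟩
    by_cases hxd : x = d
    · rw [opMap, dif_pos hxd] at hx; simp at hx
    rw [opMap_apply_ne hxd] at hx
    have hv : opFun d.val i.val x.val = c.val := congrArg Fin.val (Option.some.inj hx)
    have hxd' : x.val ≠ d.val := fun hh => hxd (Fin.ext hh)
    refine ⟨?_, Finset.mem_univ c⟩
    intro hci
    subst hci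
    revert hv
    unfold opFun
    have := x.isLt
    have := d.isLt
    split_ifs <;> omega
  · rintro ⟨hci, -⟩
    have hci' : c.val ≠ i.val := fun hh => hci (Fin.ext hh)
    have hcn := c.isLt
    have hdn := d.isLt
    have hin := i.isLt
    by_cases h1 : d.val ≤ c.val ∧ c.val < i.val
    · have hne : (⟨c.val + 1, by omega⟩ : Fin n) ≠ d := by
        simp only [ne_eq, Fin.ext_iff]; omega
      refine ⟨⟨c.val + 1, by omega⟩, ?_⟩
      rw [opMap_apply_ne hne]
      congr 1
      apply Fin.ext
      show opFun d.val i.val (c.val + 1) = c.val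
      unfold opFun; split_ifs <;> omega
    · by_cases h2 : i.val < c.val ∧ c.val ≤ d.val
      · have hne : (⟨c.val - 1, by omega⟩ : Fin n) ≠ d := by
          simp only [ne_eq, Fin.ext_iff]; omega
        refine ⟨⟨c.val - 1, by omega⟩, ?_⟩
        rw [opMap_apply_ne hne]
        congr 1
        apply Fin.ext
        show opFun d.val i.val (c.val - 1) = c.val
        unfold opFun; split_ifs <;> omega
      · have hne : c ≠ d := by
          simp only [ne_eq, Fin.ext_iff]; omega
        refine ⟨c, ?_⟩
        rw [opMap_apply_ne hne]
        congr 1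
        apply Fin.ext
        show opFun d.val i.val c.val = c.val
        unfold opFun; split_ifs <;> omega

/-! ### permutations -/

lemma val_add_of_lt' {a b : Fin n} (h : a.val + b.val < n) : (a + b).val = a.val + b.val := by
  rw [Fin.add_def]
  exact Nat.mod_eq_of_lt h

lemma val_sub' (x m : Fin n) :
    (x - m).val = if m.val ≤ x.val then x.val - m.val else n - m.val + x.val := by
  have hx := x.isLt
  have hm := m.isLt
  rw [Fin.sub_def]
  show (n - m.val + x.val) % n = _
  split_ifs with h
  · have he : n - m.val + x.val = (x.val - m.val) + n := by omega
    rw [he, Nat.add_mod_right]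
    exact Nat.mod_eq_of_lt (by omega)
  · exact Nat.mod_eq_of_lt (by omega)

def basePerm [NeZero n] (m k : Fin n) : Equiv.Perm (Fin n) :=
  (Equiv.addRight m) * (Fin.cycleRange k) * (Equiv.addRight m)⁻¹

lemma sign_basePerm [NeZero n] (m k : Fin n) :
    Equiv.Perm.sign (basePerm m k) = (-1) ^ k.val := by
  rw [basePerm, Equiv.Perm.sign_mul, Equiv.Perm.sign_mul, Equiv.Perm.sign_inv,
    Fin.sign_cycleRange, mul_comm (Equiv.Perm.sign (Equiv.addRight m)) ((-1) ^ k.val),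
    mul_assoc, Int.units_mul_self, mul_one]

lemma basePerm_addRight [NeZero n] (m k y : Fin n) :
    basePerm m k (y + m) = Fin.cycleRange k y + m := by
  have h1 : y + m = (Equiv.addRight m) y := rfl
  rw [basePerm, h1, Equiv.Perm.mul_apply, Equiv.Perm.mul_apply, show (Equiv.addRight m)⁻¹ ((Equiv.addRight m) y) = y from
    Equiv.symm_apply_apply (Equiv.addRight m) y]
  rfl

lemma basePerm_val [NeZero n] (m k x : Fin n) (hmk : m.val + k.val < n) :
    (basePerm m k x).val =
      if m.val ≤ x.val ∧ x.val < m.val + k.val then x.val + 1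
      else if x.val = m.val + k.val then m.val else x.val := by
  obtain ⟨nn, rfl⟩ := Nat.exists_eq_succ_of_ne_zero (NeZero.ne n)
  have hx := x.isLt
  have hm := m.isLt
  have hk := k.isLt
  have happ : basePerm m k x = Fin.cycleRange k (x - m) + m := by
    have h0 := basePerm_addRight m k (x - m)
    rwa [sub_add_cancel] at h0
  have hsub := val_sub' x m
  by_cases h1 : m.val ≤ x.val ∧ x.val < m.val + k.val
  · have hyval : (x - m).val = x.val - m.val := by rw [val_sub', if_pos h1.1]
    have hylt : (x - m) < k := by rw [Fin.lt_def, hyval]; omega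
    rw [happ, Fin.cycleRange_of_lt hylt]
    have hv1 : ((x - m) + 1 : Fin (nn + 1)).val = (x - m).val + 1 :=
      Fin.val_add_one_of_lt (by rw [Fin.lt_def, hyval]; simp only [Fin.val_last]; omega)
    rw [val_add_of_lt' (by rw [hv1, hyval]; omega), hv1, hyval]
    split_ifs <;> omega
  · by_cases h2 : x.val = m.val + k.val
    · have hyval : (x - m).val = k.val := by rw [val_sub', if_pos (by omega)]; omega
      have hyk : x - m = k := Fin.ext hyval
      rw [happ, hyk, Fin.cycleRange_self, zero_add]
      split_ifs <;> omega
    · have hygt : k < x - m := by rw [Fin.lt_def, val_sub']; split_ifs <;> omega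
      rw [happ, Fin.cycleRange_of_gt hygt, sub_add_cancel]
      split_ifs <;> omega

lemma neg_one_pow_parity {a b : ℕ} (h : ((-1 : ℤˣ)) ^ a = (-1) ^ b) : a % 2 = b % 2 := by
  rcases Nat.even_or_odd a with ha | ha <;> rcases Nat.even_or_odd b with hb | hb
  · rw [Nat.even_iff] at ha hb; omega
  · rw [ha.neg_one_pow, hb.neg_one_pow] at h; exact absurd h (by decide)
  · rw [ha.neg_one_pow, hb.neg_one_pow] at h; exact absurd h (by decide)
  · rw [Nat.odd_iff] at ha hb; omega

lemma neg_one_pow_eq_one' {a : ℕ} (h : a % 2 = 0) : ((-1 : ℤˣ)) ^ a = 1 :=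
  (Nat.even_iff.2 h).neg_one_pow

def revE (n : ℕ) : Equiv.Perm (Fin n) :=
  ⟨Fin.rev, Fin.rev, Fin.rev_rev, Fin.rev_rev⟩

lemma revE_apply (x : Fin n) : revE n x = x.rev := rfl

lemma sign_revE (hn : 0 < n) : Equiv.Perm.sign (revE n) = (-1) ^ (n / 2) := by
  classical
  set f : ℕ → Equiv.Perm (Fin n) := fun j =>
    Equiv.swap ⟨j % n, Nat.mod_lt _ hn⟩ ⟨(n - 1 - j) % n, Nat.mod_lt _ hn⟩ with hf
  have key : ∀ m, m ≤ n / 2 → ∀ x : Fin n,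
      ((List.range m).map f).prod x
        = if x.val < m ∨ n - 1 - x.val < m then Fin.rev x else x := by
    intro m
    induction m with
    | zero => intro _ x; simp
    | succ m ih =>
      intro hm x
      rw [List.range_succ, List.map_append, List.prod_append]
      simp only [List.map_cons, List.map_nil, List.prod_cons, List.prod_nil, mul_one]
      rw [Equiv.Perm.mul_apply]
      have hx := x.isLt
      have hm1 : m % n = m := Nat.mod_eq_of_lt (by omega)
      have hm2 : (n - 1 - m) % n = n - 1 - m := Nat.mod_eq_of_lt (by omega)
      by_cases h1 : x.val = m
      · have hxp : x = (⟨m % n, Nat.mod_lt _ hn⟩ : Fin n) :=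
          Fin.ext (show x.val = m % n by rw [hm1]; exact h1)
        rw [hf, hxp, Equiv.swap_apply_left, ih (by omega)]
        rw [if_neg (by simp only [hm2]; omega), if_pos (by omega)]
        apply Fin.ext
        rw [Fin.val_rev]
        simp only [hm2]
        omega
      · by_cases h2 : x.val = n - 1 - m
        · have hxq : x = (⟨(n - 1 - m) % n, Nat.mod_lt _ hn⟩ : Fin n) :=
            Fin.ext (show x.val = (n - 1 - m) % n by rw [hm2]; exact h2)
          rw [hf, hxq, Equiv.swap_apply_right, ih (by omega)]
          rw [if_neg (by simp only [hm1]; omega), if_pos (by omega)]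
          apply Fin.ext
          rw [Fin.val_rev]
          simp only [hm1]
          omega
        · have hne1 : x ≠ (⟨m % n, Nat.mod_lt _ hn⟩ : Fin n) := by
            simp only [ne_eq, Fin.ext_iff, hm1]; exact h1
          have hne2 : x ≠ (⟨(n - 1 - m) % n, Nat.mod_lt _ hn⟩ : Fin n) := by
            simp only [ne_eq, Fin.ext_iff, hm2]; exact h2
          rw [hf, Equiv.swap_apply_of_ne_of_ne hne1 hne2, ih (by omega)]
          by_cases hc : x.val < m ∨ n - 1 - x.val < m
          · rw [if_pos hc, if_pos (by omega)]
          · rw [if_neg hc, if_neg (by omega)]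
  have hrev : revE n = ((List.range (n / 2)).map f).prod := by
    apply Equiv.ext
    intro x
    rw [key (n / 2) le_rfl x]
    have hx := x.isLt
    by_cases hc : x.val < n / 2 ∨ n - 1 - x.val < n / 2
    · rw [if_pos hc]; rfl
    · rw [if_neg hc]
      push_neg at hc
      apply Fin.ext
      rw [revE_apply, Fin.val_rev]
      omega
  rw [hrev, Equiv.Perm.sign_prod_list_swap, List.length_map, List.length_range]
  intro g hg
  obtain ⟨j, hj, rfl⟩ := List.mem_map.1 hg
  rw [List.mem_range] at hj
  refine ⟨_, _, ?_, rfl⟩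
  simp only [ne_eq, Fin.ext_iff]
  rw [Nat.mod_eq_of_lt (by omega), Nat.mod_eq_of_lt (by omega)]
  omega

lemma perm_eq_of_agree {σ τ : Equiv.Perm (Fin n)} {d : Fin n}
    (h : ∀ x, x ≠ d → σ x = τ x) : σ = τ := by
  have hd : σ d = τ d := by
    by_cases hy : τ⁻¹ (σ d) = d
    · conv_rhs => rw [← hy]
      rw [show τ (τ⁻¹ (σ d)) = σ d from Equiv.apply_symm_apply τ (σ d)]
    · have h2 := h _ hy
      rw [show τ (τ⁻¹ (σ d)) = σ d from Equiv.apply_symm_apply τ (σ d)] at h2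
      exact absurd (σ.injective h2) hy
  apply Equiv.ext
  intro x
  by_cases hx : x = d
  · subst hx; exact hd
  · exact h x hx

lemma ext_unique {f : PT n} {d : Fin n} (hd : pDom f = Finset.univ.erase d)
    {σ τ : Equiv.Perm (Fin n)} (hσ : extendsTo σ f) (hτ : extendsTo τ f) : σ = τ := by
  apply perm_eq_of_agree (d := d)
  intro x hx
  have hmem : x ∈ pDom f := hd ▸ Finset.mem_erase.2 ⟨hx, Finset.mem_univ x⟩
  obtain ⟨a, ha⟩ := mem_pDom.1 hmem
  rw [hσ x a ha, hτ x a ha]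

lemma extends_opMap_le [NeZero n] {d i : Fin n} (h : d.val ≤ i.val) :
    extendsTo (basePerm d ⟨i.val - d.val, by omega⟩)⁻¹ (opMap d i) := by
  intro x a hx
  by_cases hxd : x = d
  · rw [opMap, dif_pos hxd] at hx; simp at hx
  rw [opMap_apply_ne hxd] at hx
  have hav : a.val = opFun d.val i.val x.val := (congrArg Fin.val (Option.some.inj hx)).symm
  have hxd' : x.val ≠ d.val := fun hh => hxd (Fin.ext hh)
  have hx' := x.isLt
  have hi' := i.isLt
  have hd' := d.isLt
  rw [Equiv.Perm.inv_eq_iff_eq]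
  apply Fin.ext
  rw [basePerm_val d _ a (by simp only; omega)]
  simp only
  unfold opFun at hav
  split_ifs at hav <;> split_ifs <;> omega

lemma extends_opMap_ge [NeZero n] {d i : Fin n} (h : i.val ≤ d.val) :
    extendsTo (basePerm i ⟨d.val - i.val, by omega⟩) (opMap d i) := by
  intro x a hx
  by_cases hxd : x = d
  · rw [opMap, dif_pos hxd] at hx; simp at hx
  rw [opMap_apply_ne hxd] at hx
  have hav : a.val = opFun d.val i.val x.val := (congrArg Fin.val (Option.some.inj hx)).symm
  have hxd' : x.val ≠ d.val := fun hh => hxd (Fin.ext hh)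
  have hx' := x.isLt
  have hi' := i.isLt
  have hd' := d.isLt
  apply Fin.ext
  rw [basePerm_val i _ x (by simp only; omega)]
  simp only
  unfold opFun at hav
  split_ifs at hav <;> split_ifs <;> omega

/-! ### composition lemmas -/

lemma pInj_mul {f g : PT n} (hf : pInj f) (hg : pInj g) : pInj (f * g) := by
  intro x y a hx hy
  rw [pt_mul_apply] at hx hy
  obtain ⟨fx, hfx, hgx⟩ := Option.bind_eq_some_iff.1 hx
  obtain ⟨fy, hfy, hgy⟩ := Option.bind_eq_some_iff.1 hy
  obtain rfl := hg fx fy a hgx hgy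
  exact hf x y fx hfx hfy

lemma mulPP {f g : PT n} (hf : orderPres f) (hg : orderPres g) : orderPres (f * g) := by
  intro x y a b hx hy hxy
  rw [pt_mul_apply] at hx hy
  obtain ⟨fx, hfx, hgx⟩ := Option.bind_eq_some_iff.1 hx
  obtain ⟨fy, hfy, hgy⟩ := Option.bind_eq_some_iff.1 hy
  exact hg fx fy a b hgx hgy (hf x y fx fy hfx hfy hxy)

lemma mulPR {f g : PT n} (hf : orderPres f) (hg : orderRev g) : orderRev (f * g) := by
  intro x y a b hx hy hxy
  rw [pt_mul_apply] at hx hy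
  obtain ⟨fx, hfx, hgx⟩ := Option.bind_eq_some_iff.1 hx
  obtain ⟨fy, hfy, hgy⟩ := Option.bind_eq_some_iff.1 hy
  exact hg fx fy a b hgx hgy (hf x y fx fy hfx hfy hxy)

lemma mulRP {f g : PT n} (hf : orderRev f) (hg : orderPres g) : orderRev (f * g) := by
  intro x y a b hx hy hxy
  rw [pt_mul_apply] at hx hy
  obtain ⟨fx, hfx, hgx⟩ := Option.bind_eq_some_iff.1 hx
  obtain ⟨fy, hfy, hgy⟩ := Option.bind_eq_some_iff.1 hy
  exact hg fy fx b a hgy hgx (hf x y fx fy hfx hfy hxy)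

lemma mulRR {f g : PT n} (hf : orderRev f) (hg : orderRev g) : orderPres (f * g) := by
  intro x y a b hx hy hxy
  rw [pt_mul_apply] at hx hy
  obtain ⟨fx, hfx, hgx⟩ := Option.bind_eq_some_iff.1 hx
  obtain ⟨fy, hfy, hgy⟩ := Option.bind_eq_some_iff.1 hy
  exact hg fy fx b a hgy hgx (hf x y fx fy hfx hfy hxy)

lemma comp3_dom {u b v : PT n} (h1 : pIm u = pDom b) (h2 : pIm b = pDom v) :
    pDom (u * b * v) = pDom u := by
  ext x
  rw [mem_pDom, mem_pDom]
  constructor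
  · rintro ⟨w, hx⟩
    rw [pt3_mul_apply] at hx
    obtain ⟨z, hz, -⟩ := Option.bind_eq_some_iff.1 hx
    obtain ⟨y, hy, -⟩ := Option.bind_eq_some_iff.1 hz
    exact ⟨y, hy⟩
  · rintro ⟨y, hy⟩
    have hy2 : y ∈ pDom b := by rw [← h1]; exact mem_pIm.2 ⟨x, hy⟩
    obtain ⟨z, hz⟩ := mem_pDom.1 hy2
    have hz2 : z ∈ pDom v := by rw [← h2]; exact mem_pIm.2 ⟨y, hz⟩
    obtain ⟨w, hw⟩ := mem_pDom.1 hz2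
    exact ⟨w, by rw [pt3_mul_apply, hy, Option.bind_some, hz, Option.bind_some]; exact hw⟩

lemma comp3_im {u b v : PT n} (h1 : pIm u = pDom b) (h2 : pIm b = pDom v) :
    pIm (u * b * v) = pIm v := by
  ext c
  rw [mem_pIm, mem_pIm]
  constructor
  · rintro ⟨x, hx⟩
    rw [pt3_mul_apply] at hx
    obtain ⟨z, -, hvz⟩ := Option.bind_eq_some_iff.1 hx
    exact ⟨z, hvz⟩
  · rintro ⟨z, hz⟩
    have hz2 : z ∈ pIm b := by rw [h2]; exact mem_pDom.2 ⟨c, hz⟩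
    obtain ⟨y, hy⟩ := mem_pIm.1 hz2
    have hy2 : y ∈ pIm u := by rw [h1]; exact mem_pDom.2 ⟨z, hy⟩
    obtain ⟨x, hx⟩ := mem_pIm.1 hy2
    exact ⟨x, by rw [pt3_mul_apply, hx, Option.bind_some, hy, Option.bind_some]; exact hz⟩

lemma card_pIm_eq {f : PT n} (hf : pInj f) : (pIm f).card = (pDom f).card := by
  classical
  refine (Finset.card_bij (fun y hy => (f y).get (by
      obtain ⟨w, hw⟩ := mem_pDom.1 hy; simp [hw])) ?_ ?_ ?_).symm
  · intro y hy
    obtain ⟨w, hw⟩ := mem_pDom.1 hy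
    simp only [hw, Option.get_some]
    exact mem_pIm.2 ⟨y, hw⟩
  · intro y1 h1 y2 h2 he
    obtain ⟨w1, hw1⟩ := mem_pDom.1 h1
    obtain ⟨w2, hw2⟩ := mem_pDom.1 h2
    simp only [hw1, hw2, Option.get_some] at he
    exact hf y1 y2 w1 hw1 (by rw [hw2, he])
  · intro z hz
    obtain ⟨y, hy⟩ := mem_pIm.1 hz
    exact ⟨y, mem_pDom.2 ⟨z, hy⟩, by simp [hy]⟩

/-! ### the reversing map -/

def revPT (n : ℕ) : PT n := fun x => some x.rev

lemma revPT_mul_apply (f : PT n) (x : Fin n) : (revPT n * f) x = f x.rev := rfl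

lemma revPT_inj : pInj (revPT n) := by
  intro x y a hx hy
  simp only [revPT, Option.some.injEq] at hx hy
  rw [← Fin.rev_rev x, hx, ← hy, Fin.rev_rev]

lemma revPT_rev : orderRev (revPT n) := by
  intro x y a b hx hy hxy
  simp only [revPT, Option.some.injEq] at hx hy
  rw [← hx, ← hy]
  exact Fin.rev_le_rev.2 hxy

lemma revPT_dom : pDom (revPT n) = Finset.univ := by
  apply Finset.eq_univ_iff_forall.2
  intro x
  exact mem_pDom.2 ⟨x.rev, rfl⟩

lemma revPT_im : pIm (revPT n) = Finset.univ := by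
  apply Finset.eq_univ_iff_forall.2
  intro c
  exact mem_pIm.2 ⟨c.rev, by rw [revPT]; rw [Fin.rev_rev]⟩

lemma pIm_revPT_mul (f : PT n) : pIm (revPT n * f) = pIm f := by
  ext c
  rw [mem_pIm, mem_pIm]
  constructor
  · rintro ⟨x, hx⟩
    rw [revPT_mul_apply] at hx
    exact ⟨x.rev, hx⟩
  · rintro ⟨y, hy⟩
    exact ⟨y.rev, by rw [revPT_mul_apply, Fin.rev_rev]; exact hy⟩

lemma mem_pDom_revPT_mul (f : PT n) (x : Fin n) :
    x ∈ pDom (revPT n * f) ↔ x.rev ∈ pDom f := by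
  rw [mem_pDom, mem_pDom, revPT_mul_apply]

lemma orderRev_unique {f g : PT n} (hfi : pInj f) (hgi : pInj g) (hfr : orderRev f)
    (hgr : orderRev g) (hdom : pDom f = pDom g) (him : pIm f = pIm g) : f = g := by
  have key : revPT n * f = revPT n * g := by
    apply orderPres_unique (pInj_mul revPT_inj hfi) (pInj_mul revPT_inj hgi)
      (mulRR revPT_rev hfr) (mulRR revPT_rev hgr)
    · ext x
      rw [mem_pDom_revPT_mul, mem_pDom_revPT_mul, hdom]
    · rw [pIm_revPT_mul, pIm_revPT_mul, him]
  funext x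
  have h := congrFun key x.rev
  rw [revPT_mul_apply, revPT_mul_apply, Fin.rev_rev] at h
  exact h

/-! ### identity map lemmas -/

lemma pid_apply (x : Fin n) : (1 : PT n) x = some x := rfl

lemma pid_inj : pInj (1 : PT n) := by
  intro x y a hx hy
  rw [pid_apply] at hx hy
  rw [Option.some.inj hx, Option.some.inj hy]

lemma pid_pres : orderPres (1 : PT n) := by
  intro x y a b hx hy hxy
  rw [pid_apply] at hx hy
  rw [← Option.some.inj hx, ← Option.some.inj hy]
  exact hxy

lemma pid_dom : pDom (1 : PT n) = Finset.univ :=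
  Finset.eq_univ_iff_forall.2 fun x => mem_pDom.2 ⟨x, rfl⟩

lemma pid_im : pIm (1 : PT n) = Finset.univ :=
  Finset.eq_univ_iff_forall.2 fun x => mem_pIm.2 ⟨x, rfl⟩

/-! ### the canonical order-reversing maps -/

def revOp (d i : Fin n) : PT n := revPT n * opMap d.rev i

lemma revOp_apply (d i x : Fin n) : revOp d i x = opMap d.rev i x.rev := rfl

lemma revOp_inj (d i : Fin n) : pInj (revOp d i) := pInj_mul revPT_inj (opMap_inj _ _)

lemma revOp_rev (d i : Fin n) : orderRev (revOp d i) := mulRP revPT_rev (opMap_pres _ _)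

lemma revOp_dom (d i : Fin n) : pDom (revOp d i) = Finset.univ.erase d := by
  ext x
  rw [revOp, mem_pDom_revPT_mul, opMap_dom, Finset.mem_erase, Finset.mem_erase]
  constructor
  · rintro ⟨h, -⟩
    exact ⟨fun hh => h (by rw [hh]), Finset.mem_univ x⟩
  · rintro ⟨h, -⟩
    exact ⟨fun hh => h (Fin.rev_inj.1 hh), Finset.mem_univ _⟩

lemma revOp_im (d i : Fin n) : pIm (revOp d i) = Finset.univ.erase i := by
  rw [revOp, pIm_revPT_mul, opMap_im]

/-! ### membership in AM -/

lemma opMap_mem_AM [NeZero n] {d i : Fin n} (hpar : d.val % 2 = i.val % 2) :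
    opMap d i ∈ AM n := by
  refine ⟨Or.inl (opMap_pres d i), opMap_inj d i, Or.inr ?_⟩
  have hd := d.isLt
  have hi := i.isLt
  rcases le_or_gt d.val i.val with h | h
  · refine ⟨_, Equiv.Perm.mem_alternatingGroup.2 ?_, extends_opMap_le h⟩
    rw [Equiv.Perm.sign_inv, sign_basePerm]
    exact neg_one_pow_eq_one' (show (i.val - d.val) % 2 = 0 by omega)
  · refine ⟨_, Equiv.Perm.mem_alternatingGroup.2 ?_, extends_opMap_ge h.le⟩
    rw [sign_basePerm]
    exact neg_one_pow_eq_one' (show (d.val - i.val) % 2 = 0 by omega)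

lemma revOp_mem_AM [NeZero n] (h4 : n % 4 = 1 ∨ n % 4 = 2) {d i : Fin n}
    (hpar : d.val % 2 = i.val % 2) : revOp d i ∈ AM n := by
  refine ⟨Or.inr (revOp_rev d i), revOp_inj d i, Or.inr ?_⟩
  have hd := d.isLt
  have hi := i.isLt
  have hrev : d.rev.val = n - (d.val + 1) := Fin.val_rev d
  rcases le_or_gt d.rev.val i.val with h | h
  · refine ⟨(basePerm d.rev ⟨i.val - d.rev.val, by omega⟩)⁻¹ * revE n,
      Equiv.Perm.mem_alternatingGroup.2 ?_, ?_⟩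
    · rw [Equiv.Perm.sign_mul, Equiv.Perm.sign_inv, sign_basePerm, sign_revE (by omega),
        ← pow_add]
      exact neg_one_pow_eq_one' (show (i.val - d.rev.val + n / 2) % 2 = 0 by rw [hrev]; omega)
    · intro x c hx
      rw [revOp_apply] at hx
      rw [Equiv.Perm.mul_apply, revE_apply]
      exact extends_opMap_le h x.rev c hx
  · refine ⟨(basePerm i ⟨d.rev.val - i.val, by omega⟩) * revE n,
      Equiv.Perm.mem_alternatingGroup.2 ?_, ?_⟩
    · rw [Equiv.Perm.sign_mul, sign_basePerm, sign_revE (by omega), ← pow_add]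
      exact neg_one_pow_eq_one' (show (d.rev.val - i.val + n / 2) % 2 = 0 by rw [hrev]; omega)
    · intro x c hx
      rw [revOp_apply] at hx
      rw [Equiv.Perm.mul_apply, revE_apply]
      exact extends_opMap_ge h.le x.rev c hx

/-! ### post-composition with the reversal -/

lemma mul_revPT_apply (f : PT n) (x : Fin n) : (f * revPT n) x = (f x).bind (revPT n) := rfl

lemma pDom_mul_revPT (f : PT n) : pDom (f * revPT n) = pDom f := by
  ext x
  rw [mem_pDom, mem_pDom]
  constructor
  · rintro ⟨c, hc⟩
    rw [mul_revPT_apply] at hc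
    obtain ⟨fx, hfx, -⟩ := Option.bind_eq_some_iff.1 hc
    exact ⟨fx, hfx⟩
  · rintro ⟨fx, hfx⟩
    exact ⟨fx.rev, by rw [mul_revPT_apply, hfx, Option.bind_some]; rfl⟩

lemma mem_pIm_mul_revPT (f : PT n) (c : Fin n) :
    c ∈ pIm (f * revPT n) ↔ c.rev ∈ pIm f := by
  rw [mem_pIm, mem_pIm]
  constructor
  · rintro ⟨x, hx⟩
    rw [mul_revPT_apply] at hx
    obtain ⟨fx, hfx, hr⟩ := Option.bind_eq_some_iff.1 hx
    have : fx.rev = c := Option.some.inj hr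
    refine ⟨x, ?_⟩
    rw [hfx, ← this, Fin.rev_rev]
  · rintro ⟨x, hx⟩
    refine ⟨x, ?_⟩
    rw [mul_revPT_apply, hx, Option.bind_some]
    show some c.rev.rev = some c
    rw [Fin.rev_rev]

/-! ### parity of the missing points -/

lemma pres_core [NeZero n] {f : PT n} (hinj : pInj f) (hp : orderPres f) {d i : Fin n}
    (hd : pDom f = Finset.univ.erase d) (hi : pIm f = Finset.univ.erase i)
    {σ : Equiv.Perm (Fin n)} (hσ : extendsTo σ f) :
    Equiv.Perm.sign σ = (-1) ^ (i.val - d.val + (d.val - i.val)) := by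
  have hfeq : f = opMap d i := orderPres_unique hinj (opMap_inj d i) hp (opMap_pres d i)
      (hd.trans (opMap_dom d i).symm) (hi.trans (opMap_im d i).symm)
  rw [hfeq] at hσ
  rcases le_or_gt d.val i.val with h | h
  · have hσeq := ext_unique (opMap_dom d i) hσ (extends_opMap_le h)
    rw [hσeq, Equiv.Perm.sign_inv, sign_basePerm]
    congr 1
    show i.val - d.val = _
    omega
  · have hσeq := ext_unique (opMap_dom d i) hσ (extends_opMap_ge h.le)
    rw [hσeq, sign_basePerm]
    congr 1
    show d.val - i.val = _
    omega

lemma key_parity (hn : 2 ≤ n) (h4 : n % 4 = 1 ∨ n % 4 = 2) {f : PT n} (hf : f ∈ AM n)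
    {d i : Fin n} (hd : pDom f = Finset.univ.erase d) (hi : pIm f = Finset.univ.erase i) :
    d.val % 2 = i.val % 2 := by
  haveI : NeZero n := ⟨by omega⟩
  have hdlt := d.isLt
  have hilt := i.isLt
  obtain ⟨σ, hσmem, hσext⟩ : ∃ σ, σ ∈ alternatingGroup (Fin n) ∧ extendsTo σ f := by
    rcases hf.2.2 with hr | hs
    · exfalso
      rw [prank, hd, Finset.card_erase_of_mem (Finset.mem_univ d), Finset.card_univ,
        Fintype.card_fin] at hr
      omega
    · exact hs
  have hσ1 : Equiv.Perm.sign σ = 1 := Equiv.Perm.mem_alternatingGroup.1 hσmem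
  rcases hf.1 with hp | hr
  · have hcore := pres_core hf.2.1 hp hd hi hσext
    rw [hσ1] at hcore
    have hpar := neg_one_pow_parity (a := 0)
      (b := i.val - d.val + (d.val - i.val)) (by rw [pow_zero]; exact hcore)
    omega
  · have hinj' : pInj (f * revPT n) := pInj_mul hf.2.1 revPT_inj
    have hp' : orderPres (f * revPT n) := mulRR hr revPT_rev
    have hd' : pDom (f * revPT n) = Finset.univ.erase d := (pDom_mul_revPT f).trans hd
    have hi' : pIm (f * revPT n) = Finset.univ.erase i.rev := by
      ext c
      rw [mem_pIm_mul_revPT, hi, Finset.mem_erase, Finset.mem_erase]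
      constructor
      · rintro ⟨h1, -⟩
        exact ⟨fun hh => h1 (by rw [hh, Fin.rev_rev]), Finset.mem_univ _⟩
      · rintro ⟨h1, -⟩
        refine ⟨fun hh => h1 ?_, Finset.mem_univ _⟩
        rw [← hh, Fin.rev_rev]
    have hσext' : extendsTo (revE n * σ) (f * revPT n) := by
      intro x c hx
      rw [mul_revPT_apply] at hx
      obtain ⟨fx, hfx, hr2⟩ := Option.bind_eq_some_iff.1 hx
      rw [Equiv.Perm.mul_apply, hσext x fx hfx, revE_apply]
      exact Option.some.inj hr2
    have hcore := pres_core hinj' hp' hd' hi' hσext'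
    rw [Equiv.Perm.sign_mul, hσ1, mul_one, sign_revE (by omega)] at hcore
    have hpar := neg_one_pow_parity hcore
    have hrv : i.rev.val = n - (i.val + 1) := Fin.val_rev i
    rw [hrv] at hpar
    omega

/-! ### small finset lemmas -/

lemma erase_eq_erase {p q : Fin n} (h : (Finset.univ.erase p : Finset (Fin n)) ⊆
    Finset.univ.erase q) : p = q := by
  by_contra hne
  have hq : q ∈ Finset.univ.erase p :=
    Finset.mem_erase.2 ⟨fun hh => hne hh.symm, Finset.mem_univ q⟩
  exact (Finset.mem_erase.1 (h hq)).1 rfl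

lemma exists_erase_im {f : PT n} (hf : pInj f) {d : Fin n}
    (hd : pDom f = Finset.univ.erase d) : ∃ i, pIm f = Finset.univ.erase i := by
  classical
  have hpos : 0 < n := d.pos
  have hcard : (pIm f).card = n - 1 := by
    rw [card_pIm_eq hf, hd, Finset.card_erase_of_mem (Finset.mem_univ d), Finset.card_univ,
      Fintype.card_fin]
  have h1 : (Finset.univ \ pIm f).card = 1 := by
    rw [Finset.card_sdiff_of_subset (Finset.subset_univ _), Finset.card_univ, Fintype.card_fin, hcard]
    omega
  obtain ⟨i, hi⟩ := Finset.card_eq_one.1 h1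
  refine ⟨i, ?_⟩
  rw [Finset.erase_eq, ← hi]
  exact (Finset.sdiff_sdiff_eq_self (Finset.subset_univ _)).symm

/-! ### the two directions -/

lemma forward (hn : 2 ≤ n) (h4 : n % 4 = 1 ∨ n % 4 = 2) {a b : PT n}
    {da db : Fin n} (hda : pDom a = Finset.univ.erase da) (hdb : pDom b = Finset.univ.erase db)
    {u v : PT n} (hu : u ∈ AM n) (hab : a = u * b * v) :
    da.val % 2 = db.val % 2 := by
  haveI : NeZero n := ⟨by omega⟩
  have hdalt := da.isLt
  have hdblt := db.isLt
  have step : ∀ x : Fin n, x ≠ da → ∃ y, u x = some y ∧ y ∈ pDom b := by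
    intro x hx
    have hxa : x ∈ pDom a := by
      rw [hda]; exact Finset.mem_erase.2 ⟨hx, Finset.mem_univ x⟩
    obtain ⟨w, hw⟩ := mem_pDom.1 hxa
    rw [hab, pt3_mul_apply] at hw
    obtain ⟨z, hz, -⟩ := Option.bind_eq_some_iff.1 hw
    obtain ⟨y, hy, hby⟩ := Option.bind_eq_some_iff.1 hz
    exact ⟨y, hy, mem_pDom.2 ⟨z, hby⟩⟩
  by_cases hdu : da ∈ pDom u
  · have hdomu : pDom u = Finset.univ := by
      apply Finset.eq_univ_iff_forall.2
      intro x
      by_cases hx : x = da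
      · rw [hx]; exact hdu
      · obtain ⟨y, hy, -⟩ := step x hx
        exact mem_pDom.2 ⟨y, hy⟩
    have himu : pIm u = Finset.univ :=
      Finset.eq_univ_of_card _ (by
        rw [card_pIm_eq hu.2.1, hdomu, Finset.card_univ])
    rcases hu.1 with hup | hur
    · have hu1 : u = 1 := orderPres_unique hu.2.1 pid_inj hup pid_pres
        (by rw [hdomu, pid_dom]) (by rw [himu, pid_im])
      have hsub : Finset.univ.erase da ⊆ Finset.univ.erase db := by
        intro x hx
        obtain ⟨y, hy, hyb⟩ := step x (Finset.mem_erase.1 hx).1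
        rw [hu1, pid_apply] at hy
        obtain rfl := Option.some.inj hy
        rwa [← hdb]
      rw [erase_eq_erase hsub]
    · have hu1 : u = revPT n := orderRev_unique hu.2.1 revPT_inj hur revPT_rev
        (by rw [hdomu, revPT_dom]) (by rw [himu, revPT_im])
      obtain ⟨σ, hσm, hσe⟩ : ∃ σ, σ ∈ alternatingGroup (Fin n) ∧ extendsTo σ u := by
        rcases hu.2.2 with hr | hs
        · exfalso
          rw [prank, hdomu, Finset.card_univ, Fintype.card_fin] at hr
          omega
        · exact hs
      have hσ : σ = revE n := by
        apply Equiv.ext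
        intro x
        rw [hσe x x.rev (by rw [hu1]; rfl), revE_apply]
      have hsign : (1 : ℤˣ) = (-1) ^ (n / 2) := by
        have hs2 : Equiv.Perm.sign σ = (-1) ^ (n / 2) := by rw [hσ]; exact sign_revE (by omega)
        rw [← hs2]
        exact (Equiv.Perm.mem_alternatingGroup.1 hσm).symm
      have hpar := neg_one_pow_parity (a := 0) (b := n / 2) (by rw [pow_zero]; exact hsign)
      rcases h4 with h41 | h42
      · have hsub : Finset.univ.erase da.rev ⊆ Finset.univ.erase db := by
          intro y hy
          have hyd : y ≠ da.rev := (Finset.mem_erase.1 hy).1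
          have hxd : y.rev ≠ da := fun hh => hyd (by rw [← hh, Fin.rev_rev])
          obtain ⟨z, hz, hzb⟩ := step y.rev hxd
          rw [hu1] at hz
          have hzy : z = y := by
            have h2 : some y.rev.rev = some z := hz
            rw [← Option.some.inj h2, Fin.rev_rev]
          rw [← hzy]
          rwa [← hdb]
        have heq : da.rev = db := erase_eq_erase hsub
        have hvr : da.rev.val = n - (da.val + 1) := Fin.val_rev da
        rw [← heq, hvr]
        omega
      · omega
  · have hdomu : pDom u = Finset.univ.erase da := by
      apply Finset.Subset.antisymm
      · intro x hx
        exact Finset.mem_erase.2 ⟨fun hh => hdu (hh ▸ hx), Finset.mem_univ x⟩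
      · intro x hx
        obtain ⟨y, hy, -⟩ := step x (Finset.mem_erase.1 hx).1
        exact mem_pDom.2 ⟨y, hy⟩
    have himu : pIm u = Finset.univ.erase db := by
      apply Finset.eq_of_subset_of_card_le
      · intro z hz
        obtain ⟨x, hx⟩ := mem_pIm.1 hz
        have hxda : x ≠ da := by
          intro hh
          rw [hh] at hx
          exact hdu (mem_pDom.2 ⟨z, hx⟩)
        obtain ⟨y, hy, hyb⟩ := step x hxda
        obtain rfl := Option.some.inj (hx.symm.trans hy)
        rwa [← hdb]
      · rw [card_pIm_eq hu.2.1, hdomu, Finset.card_erase_of_mem (Finset.mem_univ da),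
          Finset.card_erase_of_mem (Finset.mem_univ db)]
    exact key_parity hn h4 hu hdomu himu

lemma half (hn : 2 ≤ n) (h4 : n % 4 = 1 ∨ n % 4 = 2) {a b : PT n}
    (ha : a ∈ AM n) (hb : b ∈ AM n) {da db : Fin n}
    (hda : pDom a = Finset.univ.erase da) (hdb : pDom b = Finset.univ.erase db)
    (hpar : da.val % 2 = db.val % 2) :
    ∃ u v, u ∈ AM n ∧ v ∈ AM n ∧ a = u * b * v := by
  haveI : NeZero n := ⟨by omega⟩
  obtain ⟨ia, hia⟩ := exists_erase_im ha.2.1 hda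
  obtain ⟨ib, hib⟩ := exists_erase_im hb.2.1 hdb
  have hpa := key_parity hn h4 ha hda hia
  have hpb := key_parity hn h4 hb hdb hib
  have hparba : ib.val % 2 = ia.val % 2 := by omega
  rcases ha.1 with hap | har <;> rcases hb.1 with hbp | hbr
  · refine ⟨opMap da db, opMap ib ia, opMap_mem_AM hpar, opMap_mem_AM hparba, ?_⟩
    have h1 : pIm (opMap da db) = pDom b := by rw [opMap_im, hdb]
    have h2 : pIm b = pDom (opMap ib ia) := by rw [opMap_dom, hib]
    apply orderPres_unique ha.2.1
      (pInj_mul (pInj_mul (opMap_inj _ _) hb.2.1) (opMap_inj _ _)) hap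
      (mulPP (mulPP (opMap_pres _ _) hbp) (opMap_pres _ _))
    · rw [comp3_dom h1 h2, opMap_dom]; exact hda
    · rw [comp3_im h1 h2, opMap_im]; exact hia
  · refine ⟨revOp da db, opMap ib ia, revOp_mem_AM h4 hpar, opMap_mem_AM hparba, ?_⟩
    have h1 : pIm (revOp da db) = pDom b := by rw [revOp_im, hdb]
    have h2 : pIm b = pDom (opMap ib ia) := by rw [opMap_dom, hib]
    apply orderPres_unique ha.2.1
      (pInj_mul (pInj_mul (revOp_inj _ _) hb.2.1) (opMap_inj _ _)) hap
      (mulPP (mulRR (revOp_rev _ _) hbr) (opMap_pres _ _))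
    · rw [comp3_dom h1 h2, revOp_dom]; exact hda
    · rw [comp3_im h1 h2, opMap_im]; exact hia
  · refine ⟨revOp da db, opMap ib ia, revOp_mem_AM h4 hpar, opMap_mem_AM hparba, ?_⟩
    have h1 : pIm (revOp da db) = pDom b := by rw [revOp_im, hdb]
    have h2 : pIm b = pDom (opMap ib ia) := by rw [opMap_dom, hib]
    apply orderRev_unique ha.2.1
      (pInj_mul (pInj_mul (revOp_inj _ _) hb.2.1) (opMap_inj _ _)) har
      (mulRP (mulRP (revOp_rev _ _) hbp) (opMap_pres _ _))
    · rw [comp3_dom h1 h2, revOp_dom]; exact hda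
    · rw [comp3_im h1 h2, opMap_im]; exact hia
  · refine ⟨opMap da db, opMap ib ia, opMap_mem_AM hpar, opMap_mem_AM hparba, ?_⟩
    have h1 : pIm (opMap da db) = pDom b := by rw [opMap_im, hdb]
    have h2 : pIm b = pDom (opMap ib ia) := by rw [opMap_dom, hib]
    apply orderRev_unique ha.2.1
      (pInj_mul (pInj_mul (opMap_inj _ _) hb.2.1) (opMap_inj _ _)) har
      (mulRP (mulPR (opMap_pres _ _) hbr) (opMap_pres _ _))
    · rw [comp3_dom h1 h2, opMap_dom]; exact hda
    · rw [comp3_im h1 h2, opMap_im]; exact hia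

end Stmt11

/-- for `n ≡ 1, 2 (mod 4)`, rank-`n-1` elements of `AM_n` are `J`-related
iff the missing domain elements have the same parity. -/
theorem stmt11 {n : ℕ} (hn : 2 ≤ n) (h4 : n % 4 = 1 ∨ n % 4 = 2)
    (a b : PT n) (ha : a ∈ AM n) (hb : b ∈ AM n)
    (da db : Fin n) (hda : pDom a = Finset.univ.erase da) (hdb : pDom b = Finset.univ.erase db) :
    JRelIn (AM n) a b ↔ da.val % 2 = db.val % 2 := by
  constructor
  · rintro ⟨⟨u, v, hu, hv, hab⟩, -⟩
    exact Stmt11.forward hn h4 hda hdb hu hab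
  · intro hpar
    obtain ⟨u, v, hu, hv, h1⟩ := Stmt11.half hn h4 ha hb hda hdb hpar
    obtain ⟨u', v', hu', hv', h2⟩ := Stmt11.half hn h4 hb ha hdb hda hpar.symm
    exact ⟨⟨u, v, hu, hv, h1⟩, ⟨u', v', hu', hv', h2⟩⟩
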